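/- arXiv:2207.12790 — 4 statements merged into one kernel-verified Lean document; each statement's English description precedes it below -/
import Mathlib

section
/- Let T ≥ 1 and let L be a finite set of pairwise distinct columns, each column ℓ ∈ L being a pair of binary vectors (q_ℓ, p_ℓ) with q_ℓ, p_ℓ : {1,…,T} → {0,1}. Let weights χ_ℓ ∈ [0,1] for ℓ ∈ L satisfy Σ_{ℓ∈L} χ_ℓ = 1. Define Γ_t = Σ_{ℓ∈L} q_ℓ(t)·χ_ℓ and Ω_t = Σ_{ℓ∈L} p_ℓ(t)·χ_ℓ for each t ∈ {1,…,T}. Then all the weights χ_ℓ are integers (equivalently, exactly one χ_ℓ equals 1 and all others equal 0) if and only if Γ_t and Ω_t are integers for every t ∈ {1,…,T}. -/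
lemma sum_int_aux {α : Type*} {s : Finset α} {f : α → ℝ}
    (h : ∀ i ∈ s, ∃ n : ℤ, f i = (n : ℝ)) :
    ∃ n : ℤ, ∑ i ∈ s, f i = (n : ℝ) := by
  classical
  induction s using Finset.induction with
  | empty => exact ⟨0, by simp⟩
  | insert _ _ hx ih =>
    obtain ⟨m, hm⟩ := h _ (Finset.mem_insert_self _ _)
    obtain ⟨n, hn⟩ := ih (fun i hi => h i (Finset.mem_insert_of_mem hi))
    exact ⟨m + n, by rw [Finset.sum_insert hx, hm, hn]; push_cast; ring⟩

lemma agree_aux {α : Type*} (L : Finset α) (χ : α → ℝ)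
    (hχ : ∀ ℓ ∈ L, 0 ≤ χ ℓ) (hsum : ∑ ℓ ∈ L, χ ℓ = 1) (w : α → Bool)
    (hint : ∃ n : ℤ, ∑ ℓ ∈ L, (if w ℓ then (1 : ℝ) else 0) * χ ℓ = (n : ℝ)) :
    ∀ a ∈ L, 0 < χ a → ∀ b ∈ L, 0 < χ b → w a = w b := by
  classical
  obtain ⟨n, hn⟩ := hint
  have h0 : ∀ ℓ ∈ L, 0 ≤ (if w ℓ then (1 : ℝ) else 0) * χ ℓ := by
    intro ℓ hℓ; split_ifs <;> simp [hχ ℓ hℓ]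
  have hSnn : (0 : ℝ) ≤ ∑ ℓ ∈ L, (if w ℓ then (1 : ℝ) else 0) * χ ℓ :=
    Finset.sum_nonneg h0
  have hSle : ∑ ℓ ∈ L, (if w ℓ then (1 : ℝ) else 0) * χ ℓ ≤ 1 := by
    have : ∑ ℓ ∈ L, (if w ℓ then (1 : ℝ) else 0) * χ ℓ ≤ ∑ ℓ ∈ L, χ ℓ :=
      Finset.sum_le_sum (fun ℓ hℓ => by split_ifs <;> simp [hχ ℓ hℓ])
    rwa [hsum] at this
  rw [hn] at hSnn hSle
  have hn01 : n = 0 ∨ n = 1 := by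
    have h1 : (0 : ℤ) ≤ n := by exact_mod_cast hSnn
    have h2 : n ≤ 1 := by exact_mod_cast hSle
    omega
  rcases hn01 with rfl | rfl
  · -- sum = 0, so every positive-weight column has w = false
    have hz : ∀ ℓ ∈ L, (if w ℓ then (1 : ℝ) else 0) * χ ℓ = 0 :=
      (Finset.sum_eq_zero_iff_of_nonneg h0).mp (by exact_mod_cast hn)
    have key : ∀ a ∈ L, 0 < χ a → w a = false := by
      intro a ha hpos
      by_contra hw
      have hwa : w a = true := by simpa using hw
      have hza := hz a ha
      rw [if_pos hwa, one_mul] at hza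
      exact absurd hza (ne_of_gt hpos)
    intro a ha hpa b hb hpb
    rw [key a ha hpa, key b hb hpb]
  · -- sum = 1, so every positive-weight column has w = true
    have hz : ∑ ℓ ∈ L, (χ ℓ - (if w ℓ then (1 : ℝ) else 0) * χ ℓ) = 0 := by
      rw [Finset.sum_sub_distrib, hsum, hn]; push_cast; ring
    have h0' : ∀ ℓ ∈ L, 0 ≤ χ ℓ - (if w ℓ then (1 : ℝ) else 0) * χ ℓ := by
      intro ℓ hℓ; split_ifs <;> simp [hχ ℓ hℓ]
    have hz' : ∀ ℓ ∈ L, χ ℓ - (if w ℓ then (1 : ℝ) else 0) * χ ℓ = 0 :=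
      (Finset.sum_eq_zero_iff_of_nonneg h0').mp hz
    have key : ∀ a ∈ L, 0 < χ a → w a = true := by
      intro a ha hpos
      by_contra hw
      have hwa : w a = false := by simpa using hw
      have := hz' a ha
      rw [hwa] at this
      simp at this
      exact absurd this (ne_of_gt hpos)
    intro a ha hpa b hb hpb
    rw [key a ha hpa, key b hb hpb]

/-- Let `T ≥ 1` and let `L` be a finite set of pairwise distinct columns,
each column `ℓ ∈ L` being a pair of binary vectors `(q_ℓ, p_ℓ)` with
`q_ℓ, p_ℓ : {1,…,T} → {0,1}`.  Let weights `χ_ℓ ∈ [0,1]` for `ℓ ∈ L` satisfy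
`Σ_{ℓ∈L} χ_ℓ = 1`.  Define `Γ_t = Σ_{ℓ∈L} q_ℓ(t)·χ_ℓ` and `Ω_t = Σ_{ℓ∈L} p_ℓ(t)·χ_ℓ`
for each `t ∈ {1,…,T}`.  Then all the weights `χ_ℓ` are integers if and only if
`Γ_t` and `Ω_t` are integers for every `t ∈ {1,…,T}`. -/
theorem stmt_0 (T : ℕ) (hT : 1 ≤ T)
    (L : Finset ((Fin T → Bool) × (Fin T → Bool)))
    (χ : ((Fin T → Bool) × (Fin T → Bool)) → ℝ)
    (hχ : ∀ ℓ ∈ L, 0 ≤ χ ℓ ∧ χ ℓ ≤ 1)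
    (hsum : ∑ ℓ ∈ L, χ ℓ = 1) :
    (∀ ℓ ∈ L, ∃ n : ℤ, χ ℓ = (n : ℝ)) ↔
      (∀ t : Fin T,
        (∃ n : ℤ, ∑ ℓ ∈ L, (if ℓ.1 t then (1 : ℝ) else 0) * χ ℓ = (n : ℝ)) ∧
        (∃ n : ℤ, ∑ ℓ ∈ L, (if ℓ.2 t then (1 : ℝ) else 0) * χ ℓ = (n : ℝ))) := by
  classical
  constructor
  · intro h t
    constructor <;>
    · refine sum_int_aux (fun ℓ hℓ => ?_)
      obtain ⟨n, hn⟩ := h ℓ hℓ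
      split_ifs with hw
      · exact ⟨n, by rw [hn]; ring⟩
      · exact ⟨0, by simp⟩
  · intro h ℓ hℓ
    rcases eq_or_lt_of_le (hχ ℓ hℓ).1 with h0 | hpos
    · exact ⟨0, by simp [← h0]⟩
    · -- all positive-weight columns coincide with ℓ
      have key : ∀ a ∈ L, 0 < χ a → a = ℓ := by
        intro a ha hpa
        have hq : a.1 = ℓ.1 := by
          funext t
          exact agree_aux L χ (fun x hx => (hχ x hx).1) hsum (fun x => x.1 t)
            (h t).1 a ha hpa ℓ hℓ hpos
        have hp : a.2 = ℓ.2 := by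
          funext t
          exact agree_aux L χ (fun x hx => (hχ x hx).1) hsum (fun x => x.2 t)
            (h t).2 a ha hpa ℓ hℓ hpos
        exact Prod.ext hq hp
      have hzero : ∑ a ∈ L.erase ℓ, χ a = 0 := by
        refine Finset.sum_eq_zero (fun a ha => ?_)
        by_contra hne
        have hpa : 0 < χ a :=
          lt_of_le_of_ne ((hχ a (Finset.mem_of_mem_erase ha)).1) (Ne.symm hne)
        exact (Finset.ne_of_mem_erase ha) (key a (Finset.mem_of_mem_erase ha) hpa)
      have := Finset.add_sum_erase L χ hℓ
      rw [hzero, hsum] at this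
      exact ⟨1, by push_cast; linarith⟩
end

section
/- Consider the reduced single-slot MCSP instance built from a monotone 3-SAT formula F with N clauses and M variables (with content size s > 0, AoI cost f > 0, user download cost α and server update cost β satisfying α > β > 0). Suppose every cache server h caches exactly one content c(h) ∈ {A, B}. Then the total cost of this caching decision, with every request served by a candidate cache holding its content whenever possible and by the cloud otherwise, equals M·β·s + 2·M·f + M·α·s + N·f + α·s·u(c), where u(c) is the number of clauses C_k such that no variable occurring in C_k has c-value equal to the clause's requested content (A for negative clauses, B for positive clauses). -/
/-- The two contents A and B of the reduction. -/
inductive Content : Type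
  | A : Content
  | B : Content
  deriving DecidableEq

instance : Fintype Content :=
  ⟨{Content.A, Content.B}, fun x => by cases x <;> simp⟩

/-- A monotone 3-SAT clause over variables `v₁,…,v_M` (indexed by `Fin M`):
a nonempty set of at most three variables, all negated (`pos = false`, a negative
clause) or all non-negated (`pos = true`, a positive clause). -/
structure MClause (M : ℕ) : Type where
  pos : Bool
  vars : Finset (Fin M)
  nonempty : vars.Nonempty
  card_le : vars.card ≤ 3

/-- The content requested by the primary request of a clause: `A` for a negative
clause, `B` for a positive clause. -/
def reqContent {M : ℕ} (C : MClause M) : Content :=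
  if C.pos then Content.B else Content.A

open Classical in
/-- Total cost of the caching decision `σ` in the reduced single-slot MCSP instance
built from the monotone 3-SAT formula `F` (with `M` cache servers, one per variable,
and `N` primary requests, one per clause):
* each cached content incurs update cost `β·s`;
* each of the two auxiliary single-choice requests of each server (one for `A`, one
  for `B`, candidate = that server only) incurs AoI cost `f` if its content is cached
  there, and cloud cost `f + α·s` otherwise;
* the primary request of clause `C_k` (for content `reqContent (F k)`, candidates =
  the servers of the variables of `C_k`) incurs `f` if some candidate server caches
  the requested content, and `f + α·s` otherwise. -/
noncomputable def totalCost (M N : ℕ) (s f α β : ℝ)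
    (F : Fin N → MClause M) (σ : Fin M → Finset Content) : ℝ :=
  (∑ h : Fin M, ((σ h).card : ℝ) * (β * s))
    + (∑ h : Fin M, ∑ c : Content, if c ∈ σ h then f else f + α * s)
    + (∑ k : Fin N, if ∃ v ∈ (F k).vars, reqContent (F k) ∈ σ v then f else f + α * s)

open Classical in
/-- In the reduced single-slot MCSP instance built from a monotone
3-SAT formula `F` with `N` clauses and `M` variables (content size `s > 0`, AoI cost
`f > 0`, user download cost `α` and server update cost `β` with `α > β > 0`), suppose
every cache server `h` caches exactly one content `c(h) ∈ {A, B}`.  Then the total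
cost equals `M·β·s + 2·M·f + M·α·s + N·f + α·s·u(c)`, where `u(c)` is the number of
clauses `C_k` such that no variable occurring in `C_k` has `c`-value equal to the
clause's requested content. -/
theorem stmt_4 (M N : ℕ) (s f α β : ℝ)
    (hs : 0 < s) (hf : 0 < f) (hβ : 0 < β) (hαβ : β < α)
    (F : Fin N → MClause M) (c : Fin M → Content) :
    totalCost M N s f α β F (fun h => {c h}) =
      M * β * s + 2 * M * f + M * α * s + N * f +
        α * s * ((Finset.univ.filter
          (fun k : Fin N => ¬ ∃ v ∈ (F k).vars, c v = reqContent (F k))).card : ℝ) := by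

  classical
  unfold totalCost
  have h1 : (∑ h : Fin M, (((fun h => ({c h} : Finset Content)) h).card : ℝ) * (β * s))
      = M * β * s := by
    simp [Finset.card_singleton, mul_assoc]
  have h2 : (∑ h : Fin M, ∑ c' : Content, if c' ∈ ({c h} : Finset Content) then f else f + α * s)
      = 2 * M * f + M * α * s := by
    have key : ∀ h : Fin M,
        (∑ c' : Content, if c' ∈ ({c h} : Finset Content) then f else f + α * s)
          = 2 * f + α * s := by
      intro h
      rw [show (Finset.univ : Finset Content) = {Content.A, Content.B} by decide]
      cases hch : c h <;> simp [Finset.sum_insert, hch] <;> ring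
    rw [Finset.sum_congr rfl fun h _ => key h]
    simp
    ring
  have h3 : (∑ k : Fin N, if ∃ v ∈ (F k).vars, reqContent (F k) ∈ ({c v} : Finset Content)
        then f else f + α * s)
      = N * f + α * s * ((Finset.univ.filter
          (fun k : Fin N => ¬ ∃ v ∈ (F k).vars, c v = reqContent (F k))).card : ℝ) := by
    have key : ∀ k : Fin N,
        (if ∃ v ∈ (F k).vars, reqContent (F k) ∈ ({c v} : Finset Content) then f else f + α * s)
          = f + (if ¬ ∃ v ∈ (F k).vars, c v = reqContent (F k) then α * s else 0) := by
      intro k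
      have : (∃ v ∈ (F k).vars, reqContent (F k) ∈ ({c v} : Finset Content))
          ↔ (∃ v ∈ (F k).vars, c v = reqContent (F k)) := by
        simp [Finset.mem_singleton, eq_comm]
      rw [if_congr this rfl rfl]
      by_cases h : ∃ v ∈ (F k).vars, c v = reqContent (F k) <;> simp [h]
    rw [Finset.sum_congr rfl fun k _ => key k, Finset.sum_add_distrib,
      Finset.sum_ite, Finset.sum_const, Finset.sum_const]
    simp [mul_comm]
  rw [h1, h2, h3]
  ring
end

section
/- Consider the reduced single-slot MCSP instance built from a monotone 3-SAT formula F with N clauses and M variables (with content size s > 0, AoI cost f > 0, user download cost α and server update cost β satisfying α > β > 0). If a caching decision leaves some server caching no content, then there exists another caching decision, obtained by letting that server cache one content (and keeping all other servers unchanged), whose total cost is strictly smaller. Consequently, in every cost-minimizing caching decision each server caches exactly one of the two contents A and B. -/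
lemma content_univ : (Finset.univ : Finset Content) = {Content.A, Content.B} := by decide

open Classical in
lemma key_lemma (M N : ℕ) (s f α β : ℝ)
    (hs : 0 < s) (hβ : 0 < β) (hαβ : β < α)
    (F : Fin N → MClause M) (σ : Fin M → Finset Content) (h₀ : Fin M)
    (h0 : σ h₀ = ∅) (c₀ : Content) :
    (∑ h : Fin M, (((Function.update σ h₀ {c₀}) h).card : ℝ) * (β * s))
    + (∑ h : Fin M, ∑ c : Content, if c ∈ (Function.update σ h₀ {c₀}) h then f else f + α * s)
    + (∑ k : Fin N, if ∃ v ∈ (F k).vars, reqContent (F k) ∈ (Function.update σ h₀ {c₀}) v then f else f + α * s)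
    <
    (∑ h : Fin M, ((σ h).card : ℝ) * (β * s))
    + (∑ h : Fin M, ∑ c : Content, if c ∈ σ h then f else f + α * s)
    + (∑ k : Fin N, if ∃ v ∈ (F k).vars, reqContent (F k) ∈ σ v then f else f + α * s) := by
  have hAB : Content.A ≠ Content.B := by decide
  have hαs : β * s < α * s := mul_lt_mul_of_pos_right hαβ hs
  have hα0 : 0 < α * s := lt_trans (mul_pos hβ hs) hαs
  have split : ∀ (g : Fin M → ℝ),
      ∑ h : Fin M, g h = g h₀ + ∑ h ∈ Finset.univ.erase h₀, g h :=
    fun g => (Finset.add_sum_erase _ g (Finset.mem_univ h₀)).symm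
  have upd_eq : ∀ (g : Finset Content → ℝ),
      ∑ h ∈ Finset.univ.erase h₀, g ((Function.update σ h₀ {c₀}) h)
        = ∑ h ∈ Finset.univ.erase h₀, g (σ h) := by
    intro g
    refine Finset.sum_congr rfl fun h hh => ?_
    rw [Function.update_of_ne (Finset.ne_of_mem_erase hh)]
  -- first sums
  have e1 : ∑ h : Fin M, (((Function.update σ h₀ {c₀}) h).card : ℝ) * (β * s)
      = (β * s) + ∑ h ∈ Finset.univ.erase h₀, ((σ h).card : ℝ) * (β * s) := by
    rw [split (fun h => (((Function.update σ h₀ {c₀}) h).card : ℝ) * (β * s)),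
      upd_eq (fun t => ((t.card : ℝ)) * (β * s))]
    simp
  have e1' : ∑ h : Fin M, ((σ h).card : ℝ) * (β * s)
      = ∑ h ∈ Finset.univ.erase h₀, ((σ h).card : ℝ) * (β * s) := by
    rw [split (fun h => ((σ h).card : ℝ) * (β * s)), h0]
    simp
  -- second sums
  have inner1 : (∑ c : Content, if c ∈ ({c₀} : Finset Content) then f else f + α * s)
      = f + (f + α * s) := by
    cases c₀ <;> rw [content_univ, Finset.sum_pair hAB] <;> simp <;> ring
  have inner0 : (∑ c : Content, if c ∈ (∅ : Finset Content) then f else f + α * s)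
      = (f + α * s) + (f + α * s) := by
    rw [content_univ, Finset.sum_pair hAB]; simp
  have e2 : ∑ h : Fin M, (∑ c : Content, if c ∈ (Function.update σ h₀ {c₀}) h then f else f + α * s)
      = (f + (f + α * s)) + ∑ h ∈ Finset.univ.erase h₀,
          (∑ c : Content, if c ∈ σ h then f else f + α * s) := by
    rw [split (fun h => ∑ c : Content, if c ∈ (Function.update σ h₀ {c₀}) h then f else f + α * s),
      upd_eq (fun t => ∑ c : Content, if c ∈ t then f else f + α * s)]
    simp only [Function.update_self, inner1]
  have e2' : ∑ h : Fin M, (∑ c : Content, if c ∈ σ h then f else f + α * s)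
      = ((f + α * s) + (f + α * s)) + ∑ h ∈ Finset.univ.erase h₀,
          (∑ c : Content, if c ∈ σ h then f else f + α * s) := by
    rw [split (fun h => ∑ c : Content, if c ∈ σ h then f else f + α * s), h0, inner0]
  -- third sums
  have e3 : (∑ k : Fin N, if ∃ v ∈ (F k).vars, reqContent (F k) ∈ (Function.update σ h₀ {c₀}) v then f else f + α * s)
      ≤ ∑ k : Fin N, if ∃ v ∈ (F k).vars, reqContent (F k) ∈ σ v then f else f + α * s := by
    refine Finset.sum_le_sum fun k _ => ?_
    by_cases hk : ∃ v ∈ (F k).vars, reqContent (F k) ∈ σ v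
    · obtain ⟨v, hv, hc⟩ := hk
      have hvne : v ≠ h₀ := by
        intro h; rw [h, h0] at hc; exact absurd hc (Finset.notMem_empty _)
      have : ∃ v ∈ (F k).vars, reqContent (F k) ∈ (Function.update σ h₀ {c₀}) v :=
        ⟨v, hv, by rwa [Function.update_of_ne hvne]⟩
      rw [if_pos this, if_pos ⟨v, hv, hc⟩]
    · rw [if_neg hk]
      split <;> linarith
  rw [e1, e1', e2, e2']
  linarith

/-- In the reduced single-slot MCSP instance built from a monotone
3-SAT formula `F` with `N` clauses and `M` variables (content size `s > 0`, AoI cost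
`f > 0`, user download cost `α` and server update cost `β` with `α > β > 0`):
if a caching decision (each server caching a set of contents of total size at most `s`)
leaves some server caching no content, then there exists another caching decision,
obtained by letting that server cache one content (and keeping all other servers
unchanged), whose total cost is strictly smaller.  Consequently, in every
cost-minimizing caching decision each server caches exactly one of the two contents
`A` and `B`. -/
theorem stmt_5 (M N : ℕ) (s f α β : ℝ)
    (hs : 0 < s) (hf : 0 < f) (hβ : 0 < β) (hαβ : β < α)
    (F : Fin N → MClause M) :
    (∀ σ : Fin M → Finset Content, (∀ h : Fin M, ((σ h).card : ℝ) * s ≤ s) →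
      ∀ h₀ : Fin M, σ h₀ = ∅ →
        ∃ c₀ : Content,
          totalCost M N s f α β F (Function.update σ h₀ {c₀}) <
            totalCost M N s f α β F σ) ∧
    (∀ σ : Fin M → Finset Content, (∀ h : Fin M, ((σ h).card : ℝ) * s ≤ s) →
      (∀ σ' : Fin M → Finset Content, (∀ h : Fin M, ((σ' h).card : ℝ) * s ≤ s) →
        totalCost M N s f α β F σ ≤ totalCost M N s f α β F σ') →
      ∀ h : Fin M, ∃ c : Content, σ h = {c}) := by
  classical
  have part1 : ∀ σ : Fin M → Finset Content, (∀ h : Fin M, ((σ h).card : ℝ) * s ≤ s) →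
      ∀ h₀ : Fin M, σ h₀ = ∅ →
        ∃ c₀ : Content,
          totalCost M N s f α β F (Function.update σ h₀ {c₀}) <
            totalCost M N s f α β F σ := by
    intro σ _ h₀ h0
    exact ⟨Content.A, key_lemma M N s f α β hs hβ hαβ F σ h₀ h0 Content.A⟩
  refine ⟨part1, ?_⟩
  intro σ hcap hmin h
  have hcard : (σ h).card ≤ 1 := by
    by_contra hc
    push_neg at hc
    have h2 : (2 : ℝ) ≤ ((σ h).card : ℝ) := by exact_mod_cast hc
    have := hcap h
    nlinarith
  have hne : σ h ≠ ∅ := by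
    intro h0
    obtain ⟨c₀, hlt⟩ := part1 σ hcap h h0
    have hcap' : ∀ h' : Fin M, (((Function.update σ h {c₀}) h').card : ℝ) * s ≤ s := by
      intro h'
      by_cases hh : h' = h
      · subst hh; simp
      · rw [Function.update_of_ne hh]; exact hcap h'
    exact absurd (hmin _ hcap') (not_le.mpr hlt)
  obtain ⟨c, hc⟩ := Finset.card_eq_one.mp
    (le_antisymm hcard (Finset.one_le_card.mpr (Finset.nonempty_of_ne_empty hne)))
  exact ⟨c, hc⟩
end

section
/- Fix a horizon of T ≥ 1 time slots and a single content on a single cache server. A pair of binary assignments (x, z), where x_{t,a} ∈ {0,1} is defined for 1 ≤ t ≤ T and 0 ≤ a ≤ t−1 and z_t ∈ {0,1} for 1 ≤ t ≤ T, is called feasible if it satisfies the AoI-evolution constraints x_{t−1,a−1} ≥ x_{t,a} for all 2 ≤ t ≤ T and 1 ≤ a ≤ t−1, and the consistency constraints Σ_{a=0}^{t−1} x_{t,a} = z_t for all 1 ≤ t ≤ T. Then the map Φ sending a feasible (x, z) to the pair (q, p) with q_t = z_t and p_t = x_{t,0} is a bijection from the set of feasible pairs (x, z) onto the set D of pairs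 of binary vectors (q, p) of length T satisfying: p_t ≤ q_t for all t, and whenever q_t = 1, either p_t = 1 or (t ≥ 2 and q_{t−1} = 1). Moreover, the inverse map is given explicitly by: x_{t,a} = 1 if and only if q_τ = 1 for all τ ∈ {t−a, …, t}, p_{t−a} = 1, and p_τ = 0 for all τ ∈ {t−a+1, …, t}. -/
/-- Feasibility of a pair of binary assignments `(x, z)` over a horizon of `T` time
slots (0-indexed: slot `t : Fin T` stands for slot `t+1` of `{1,…,T}`), where
`x t a = true` means the content is cached with AoI `a` in slot `t` and
`z t = true` means the content is cached in slot `t`: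
* AoI-evolution constraints: `x_{t−1,a−1} ≥ x_{t,a}` whenever `a ≥ 1`;
* consistency constraints: `Σ_{a=0}^{t} x_{t,a} = z_t` for every slot `t`. -/
def Feasible (T : ℕ) (x : (t : Fin T) → Fin (t.1 + 1) → Bool) (z : Fin T → Bool) : Prop :=
  (∀ (t : Fin T) (a : Fin (t.1 + 1)), 1 ≤ a.1 →
      x t a ≤ x ⟨t.1 - 1, Nat.lt_of_le_of_lt (Nat.sub_le _ _) t.isLt⟩
          ((⟨a.1 - 1, by have := a.isLt; omega⟩ : Fin (t.1 - 1 + 1)))) ∧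
  (∀ t : Fin T,
      (∑ a : Fin (t.1 + 1), (if x t a then 1 else 0)) = (if z t then 1 else 0))

/-- The set `D`: pairs of binary vectors `(q, p)` of length `T` satisfying `p_t ≤ q_t`
for all `t`, and: whenever `q_t = 1`, either `p_t = 1` or (`t ≥ 2` and `q_{t−1} = 1`)
(in 0-indexed form: `1 ≤ t` and `q_{t−1} = 1`). -/
def InD (T : ℕ) (qp : (Fin T → Bool) × (Fin T → Bool)) : Prop :=
  (∀ t : Fin T, qp.2 t ≤ qp.1 t) ∧
  (∀ t : Fin T, qp.1 t = true →
      qp.2 t = true ∨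
        (1 ≤ t.1 ∧ qp.1 ⟨t.1 - 1, Nat.lt_of_le_of_lt (Nat.sub_le _ _) t.isLt⟩ = true))

section Aux
variable {T : ℕ}

/-- The condition characterizing `x t a = true` in terms of `(q, p)`. -/
def Cond (q p : Fin T → Bool) (t : Fin T) (a : ℕ) : Prop :=
  (∀ τ : Fin T, t.1 - a ≤ τ.1 → τ.1 ≤ t.1 → q τ = true) ∧
  p ⟨t.1 - a, Nat.lt_of_le_of_lt (Nat.sub_le _ _) t.isLt⟩ = true ∧
  (∀ τ : Fin T, t.1 - a + 1 ≤ τ.1 → τ.1 ≤ t.1 → p τ = false)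

instance (q p : Fin T → Bool) (t : Fin T) (a : ℕ) : Decidable (Cond q p t a) := by
  unfold Cond; infer_instance

lemma cond_uniq {q p : Fin T → Bool} {t : Fin T} {a b : ℕ}
    (ha : a ≤ t.1) (hb : b ≤ t.1) (hca : Cond q p t a) (hcb : Cond q p t b) : a = b := by
  have key : ∀ a b : ℕ, a < b → b ≤ t.1 → Cond q p t a → Cond q p t b → False := by
    intro a b hab hbt hca hcb
    have h1 := hcb.2.2 ⟨t.1 - a, Nat.lt_of_le_of_lt (Nat.sub_le _ _) t.isLt⟩
      (by simp only [Fin.val_mk]; omega) (by simp only [Fin.val_mk]; omega)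
    exact Bool.noConfusion (hca.2.1.symm.trans h1)
  by_contra hne
  rcases Nat.lt_or_ge a b with h | h
  · exact key a b h hb hca hcb
  · exact key b a (by omega) ha hcb hca

lemma x_congr (x : (t : Fin T) → Fin (t.1 + 1) → Bool) {s s' : Fin T} (h : s = s')
    {a : Fin (s.1 + 1)} {b : Fin (s'.1 + 1)} (hab : a.1 = b.1) : x s a = x s' b := by
  subst h; congr 1; exact Fin.ext hab

lemma sum_ind_one {n : ℕ} (f : Fin n → Bool) (a : Fin n) (ha : f a = true)
    (huniq : ∀ b, f b = true → b = a) :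
    (∑ b : Fin n, (if f b then 1 else 0)) = 1 := by
  rw [Finset.sum_eq_single a]
  · simp [ha]
  · intro b _ hb
    by_cases h : f b = true
    · exact absurd (huniq b h) hb
    · simp [h]
  · simp

lemma sum_ind_zero {n : ℕ} (f : Fin n → Bool) (h : ∀ b, f b = false) :
    (∑ b : Fin n, (if f b then 1 else 0)) = 0 := by
  apply Finset.sum_eq_zero
  intro b _
  simp [h b]

section FeasibleFacts
variable {x : (t : Fin T) → Fin (t.1 + 1) → Bool} {z : Fin T → Bool}

lemma z_of_x (hf : Feasible T x z) {t : Fin T} {a : Fin (t.1 + 1)} (h : x t a = true) :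
    z t = true := by
  have hs := (hf.2 t)
  have h1 : (1 : ℕ) ≤ ∑ b : Fin (t.1 + 1), (if x t b then 1 else 0) := by
    have := Finset.single_le_sum (f := fun b : Fin (t.1 + 1) => (if x t b then (1:ℕ) else 0))
      (fun b _ => by positivity) (Finset.mem_univ a)
    simpa [h] using this
  rw [hs] at h1
  by_contra hz
  simp [Bool.not_eq_true] at hz
  simp [hz] at h1

lemma x_uniq (hf : Feasible T x z) {t : Fin T} {a b : Fin (t.1 + 1)}
    (ha : x t a = true) (hb : x t b = true) : a = b := by
  by_contra hne
  have h2 : (2 : ℕ) ≤ ∑ c : Fin (t.1 + 1), (if x t c then 1 else 0) := by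
    have hsub : ({a, b} : Finset (Fin (t.1 + 1))) ⊆ Finset.univ := Finset.subset_univ _
    have := Finset.sum_le_sum_of_subset
      (f := fun c : Fin (t.1+1) => (if x t c then (1:ℕ) else 0)) hsub
    rwa [Finset.sum_pair hne, if_pos ha, if_pos hb] at this
  rw [hf.2 t] at h2
  split at h2 <;> omega

lemma x_exists (hf : Feasible T x z) {t : Fin T} (h : z t = true) :
    ∃ a, x t a = true := by
  by_contra hne
  push_neg at hne
  have h0 := sum_ind_zero (fun a => x t a) (fun b => by
    have := hne b; simpa [Bool.not_eq_true] using this)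
  rw [hf.2 t, h] at h0
  simp at h0

lemma char_forward (hf : Feasible T x z) :
    ∀ n, ∀ (t : Fin T) (a : Fin (t.1 + 1)), a.1 = n → x t a = true →
      Cond z (fun s => x s ⟨0, Nat.succ_pos _⟩) t a.1 := by
  intro n
  induction n with
  | zero =>
    intro t a h0 hx
    refine ⟨?_, ?_, ?_⟩
    · intro τ h1 h2
      have : τ = t := Fin.ext (by omega)
      subst this
      exact z_of_x hf hx
    · show x ⟨t.1 - a.1, _⟩ ⟨0, _⟩ = true
      have he : (⟨t.1 - a.1, Nat.lt_of_le_of_lt (Nat.sub_le _ _) t.isLt⟩ : Fin T) = t :=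
        Fin.ext (by simp only [Fin.val_mk]; omega)
      rw [x_congr x he (b := a) (by simp only [Fin.val_mk]; omega)]
      exact hx
    · intro τ h1 h2
      exact absurd h1 (by omega)
  | succ n ih =>
    intro t a h0 hx
    have hat : a.1 ≤ t.1 := by have := a.isLt; omega
    have ht1 : 1 ≤ t.1 := by omega
    have hchain := hf.1 t a (by omega)
    rw [hx] at hchain
    have hx' : x ⟨t.1 - 1, Nat.lt_of_le_of_lt (Nat.sub_le _ _) t.isLt⟩
        ⟨a.1 - 1, by simp only [Fin.val_mk]; have := a.isLt; omega⟩ = true :=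
      Bool.eq_true_of_true_le hchain
    have ihc := ih ⟨t.1 - 1, Nat.lt_of_le_of_lt (Nat.sub_le _ _) t.isLt⟩
        ⟨a.1 - 1, by simp only [Fin.val_mk]; have := a.isLt; omega⟩
        (show a.1 - 1 = n by omega) hx'
    obtain ⟨ih1, ih2, ih3⟩ := ihc
    refine ⟨?_, ?_, ?_⟩
    · intro τ h1 h2
      rcases Nat.lt_or_ge τ.1 t.1 with h | h
      · exact ih1 τ (show t.1 - 1 - (a.1 - 1) ≤ τ.1 by omega) (show τ.1 ≤ t.1 - 1 by omega)
      · have : τ = t := Fin.ext (by omega)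
        subst this
        exact z_of_x hf hx
    · show x ⟨t.1 - a.1, _⟩ ⟨0, _⟩ = true
      refine (x_congr x
        (s := (⟨t.1 - a.1, Nat.lt_of_le_of_lt (Nat.sub_le _ _) t.isLt⟩ : Fin T))
        (s' := (⟨t.1 - 1 - (a.1 - 1),
          Nat.lt_of_le_of_lt (Nat.sub_le _ _)
            (Nat.lt_of_le_of_lt (Nat.sub_le _ _) t.isLt)⟩ : Fin T))
        (Fin.ext (show t.1 - a.1 = t.1 - 1 - (a.1 - 1) by omega))
        (a := ⟨0, Nat.succ_pos _⟩) (b := ⟨0, Nat.succ_pos _⟩) rfl).trans ?_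
      exact ih2
    · intro τ h1 h2
      rcases Nat.lt_or_ge τ.1 t.1 with h | h
      · exact ih3 τ (show t.1 - 1 - (a.1 - 1) + 1 ≤ τ.1 by omega) (show τ.1 ≤ t.1 - 1 by omega)
      · have : τ = t := Fin.ext (by omega)
        subst this
        show x τ ⟨0, _⟩ = false
        rw [Bool.eq_false_iff]
        intro hc
        have h0' := x_uniq hf hc hx
        have := congrArg Fin.val h0'
        simp only [Fin.val_mk] at this
        omega

lemma char_iff (hf : Feasible T x z) (t : Fin T) (a : Fin (t.1 + 1)) :
    x t a = true ↔ Cond z (fun s => x s ⟨0, Nat.succ_pos _⟩) t a.1 := by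
  constructor
  · exact char_forward hf a.1 t a rfl
  · intro hc
    have hq : z t = true := hc.1 t (Nat.sub_le _ _) le_rfl
    obtain ⟨b, hb⟩ := x_exists hf hq
    have hcb := char_forward hf b.1 t b rfl hb
    have hab : a.1 = b.1 :=
      cond_uniq (by have := a.isLt; omega) (by have := b.isLt; omega) hc hcb
    rw [Fin.ext hab]
    exact hb

end FeasibleFacts

section Construct
variable {q p : Fin T → Bool}

/-- The inverse construction. -/
def xC (q p : Fin T → Bool) : (t : Fin T) → Fin (t.1 + 1) → Bool :=
  fun t a => decide (Cond q p t a.1)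

lemma xC_iff {t : Fin T} {a : Fin (t.1 + 1)} : xC q p t a = true ↔ Cond q p t a.1 := by
  simp [xC]

lemma cond_exists (hD : InD T (q, p)) :
    ∀ n (t : Fin T), t.1 = n → q t = true → ∃ a, a ≤ t.1 ∧ Cond q p t a := by
  intro n
  induction n using Nat.strong_induction_on with
  | _ n ih =>
    intro t ht hq
    rcases Bool.eq_false_or_eq_true (p t) with hp | hp
    · -- p t = true
      refine ⟨0, Nat.zero_le _, ?_, ?_, ?_⟩
      · intro τ hl hr
        have : τ = t := Fin.ext (by omega)
        subst this; exact hq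
      · have he : (⟨t.1 - 0, Nat.lt_of_le_of_lt (Nat.sub_le _ _) t.isLt⟩ : Fin T) = t :=
          Fin.ext (by simp only [Fin.val_mk]; omega)
        rw [he]; exact hp
      · intro τ hl hr; exact absurd hl (by omega)
    · -- p t = false
      rcases hD.2 t hq with hp' | ⟨h1, hq'⟩
      · exact absurd hp' (by simp [hp])
      · obtain ⟨a', ha', hc'⟩ := ih (t.1 - 1) (by omega)
          ⟨t.1 - 1, Nat.lt_of_le_of_lt (Nat.sub_le _ _) t.isLt⟩ rfl hq'
        have ha't : a' ≤ t.1 - 1 := by simpa using ha'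
        refine ⟨a' + 1, by omega, ?_, ?_, ?_⟩
        · intro τ hl hr
          rcases Nat.lt_or_ge τ.1 t.1 with h | h
          · exact hc'.1 τ (show t.1 - 1 - a' ≤ τ.1 by omega) (show τ.1 ≤ t.1 - 1 by omega)
          · have : τ = t := Fin.ext (by omega)
            subst this; exact hq
        · have h2 := hc'.2.1
          have he : (⟨t.1 - 1 - a', Nat.lt_of_le_of_lt (Nat.sub_le _ _)
              (Nat.lt_of_le_of_lt (Nat.sub_le _ _) t.isLt)⟩ : Fin T)
              = ⟨t.1 - (a' + 1), Nat.lt_of_le_of_lt (Nat.sub_le _ _) t.isLt⟩ :=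
            Fin.ext (show t.1 - 1 - a' = t.1 - (a' + 1) by omega)
          rw [← he]; exact h2
        · intro τ hl hr
          rcases Nat.lt_or_ge τ.1 t.1 with h | h
          · exact hc'.2.2 τ (show t.1 - 1 - a' + 1 ≤ τ.1 by omega) (show τ.1 ≤ t.1 - 1 by omega)
          · have : τ = t := Fin.ext (by omega)
            subst this; exact hp

lemma feasible_xC (hD : InD T (q, p)) : Feasible T (xC q p) q := by
  constructor
  · intro t a ha
    rcases Bool.eq_false_or_eq_true (xC q p t a) with h | h
    · -- = true
      have hc := xC_iff.mp h
      have hat : a.1 ≤ t.1 := by have := a.isLt; omega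
      have hgoal : Cond q p ⟨t.1 - 1, Nat.lt_of_le_of_lt (Nat.sub_le _ _) t.isLt⟩ (a.1 - 1) := by
        refine ⟨?_, ?_, ?_⟩
        · intro τ hl hr
          refine hc.1 τ ?_ ?_
          · have hl' : t.1 - 1 - (a.1 - 1) ≤ τ.1 := hl
            omega
          · have hr' : τ.1 ≤ t.1 - 1 := hr
            omega
        · have h2 := hc.2.1
          have he : (⟨t.1 - a.1, Nat.lt_of_le_of_lt (Nat.sub_le _ _) t.isLt⟩ : Fin T)
              = ⟨t.1 - 1 - (a.1 - 1), Nat.lt_of_le_of_lt (Nat.sub_le _ _)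
                (Nat.lt_of_le_of_lt (Nat.sub_le _ _) t.isLt)⟩ :=
            Fin.ext (show t.1 - a.1 = t.1 - 1 - (a.1 - 1) by omega)
          rw [he] at h2
          exact h2
        · intro τ hl hr
          refine hc.2.2 τ ?_ ?_
          · have hl' : t.1 - 1 - (a.1 - 1) + 1 ≤ τ.1 := hl
            omega
          · have hr' : τ.1 ≤ t.1 - 1 := hr
            omega
      have hb : xC q p ⟨t.1 - 1, Nat.lt_of_le_of_lt (Nat.sub_le _ _) t.isLt⟩
          ⟨a.1 - 1, by simp only [Fin.val_mk]; have := a.isLt; omega⟩ = true :=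
        xC_iff.mpr hgoal
      rw [h, hb]
    · rw [h]; exact Bool.false_le _
  · intro t
    rcases Bool.eq_false_or_eq_true (q t) with hq | hq
    · -- q t = true
      rw [hq, if_pos rfl]
      obtain ⟨a, ha, hc⟩ := cond_exists hD t.1 t rfl hq
      apply sum_ind_one (fun b => xC q p t b) ⟨a, by omega⟩ (xC_iff.mpr hc)
      intro b hb
      have hcb := xC_iff.mp hb
      exact Fin.ext (cond_uniq (by have := b.isLt; omega) ha hcb hc)
    · rw [hq, if_neg (by simp)]
      apply sum_ind_zero
      intro b
      rw [Bool.eq_false_iff]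
      intro hb
      have hc := xC_iff.mp hb
      have := hc.1 t (Nat.sub_le _ _) le_rfl
      simp [hq] at this

lemma xC_zero (hD : InD T (q, p)) (t : Fin T) :
    xC q p t ⟨0, Nat.succ_pos _⟩ = p t := by
  rcases Bool.eq_false_or_eq_true (p t) with hp | hp
  · -- p t = true
    rw [hp]
    apply xC_iff.mpr
    show Cond q p t 0
    have hq : q t = true := by
      have h : p t ≤ q t := hD.1 t
      rw [hp] at h
      exact Bool.eq_true_of_true_le h
    refine ⟨?_, ?_, ?_⟩
    · intro τ hl hr
      have : τ = t := Fin.ext (by omega)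
      subst this; exact hq
    · have he : (⟨t.1 - 0, Nat.lt_of_le_of_lt (Nat.sub_le _ _) t.isLt⟩ : Fin T) = t :=
        Fin.ext (by simp only [Fin.val_mk]; omega)
      rw [he]; exact hp
    · intro τ hl hr; exact absurd hl (by omega)
  · -- p t = false
    rw [hp, Bool.eq_false_iff]
    intro hb
    have hc := xC_iff.mp hb
    have h2 := hc.2.1
    have he : (⟨t.1 - 0, Nat.lt_of_le_of_lt (Nat.sub_le _ _) t.isLt⟩ : Fin T) = t :=
      Fin.ext (by simp only [Fin.val_mk]; omega)
    rw [he] at h2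
    exact absurd h2 (by simp [hp])

end Construct

lemma inD_of_feasible {x : (t : Fin T) → Fin (t.1 + 1) → Bool} {z : Fin T → Bool}
    (hf : Feasible T x z) :
    InD T (z, fun t : Fin T => x t ⟨0, Nat.succ_pos _⟩) := by
  constructor
  · intro t
    rcases Bool.eq_false_or_eq_true (x t ⟨0, Nat.succ_pos _⟩) with h | h
    · show x t ⟨0, _⟩ ≤ z t
      rw [h, z_of_x hf h]
    · show x t ⟨0, _⟩ ≤ z t
      rw [h]; exact Bool.false_le _
  · intro t hq
    obtain ⟨a, ha⟩ := x_exists hf hq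
    rcases Nat.eq_zero_or_pos a.1 with h0 | h0
    · left
      have : a = ⟨0, Nat.succ_pos _⟩ := Fin.ext h0
      rw [this] at ha
      exact ha
    · right
      have hat : a.1 ≤ t.1 := by have := a.isLt; omega
      refine ⟨by omega, ?_⟩
      have hchain := hf.1 t a h0
      rw [ha] at hchain
      exact z_of_x hf (Bool.eq_true_of_true_le hchain)

end Aux

/-- Fix a horizon of `T ≥ 1` time slots and a single content on a
single cache server.  The map `Φ` sending a feasible pair `(x, z)` to the pair
`(q, p)` with `q_t = z_t` and `p_t = x_{t,0}` is a bijection from the set of feasible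
pairs `(x, z)` onto the set `D`.  Moreover, the inverse map is given explicitly by:
`x_{t,a} = 1` if and only if `q_τ = 1` for all `τ ∈ {t−a, …, t}`, `p_{t−a} = 1`, and
`p_τ = 0` for all `τ ∈ {t−a+1, …, t}`. -/
theorem stmt_8 (T : ℕ) (hT : 1 ≤ T) :
    ∃ Φ : {xz : ((t : Fin T) → Fin (t.1 + 1) → Bool) × (Fin T → Bool) //
            Feasible T xz.1 xz.2} →
          {qp : (Fin T → Bool) × (Fin T → Bool) // InD T qp},
      (∀ xz, (Φ xz).val =
          (xz.val.2, fun t : Fin T => xz.val.1 t ⟨0, Nat.succ_pos _⟩)) ∧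
      Function.Bijective Φ ∧
      (∀ xz, ∀ (t : Fin T) (a : Fin (t.1 + 1)),
        xz.val.1 t a = true ↔
          ((∀ τ : Fin T, t.1 - a.1 ≤ τ.1 → τ.1 ≤ t.1 → (Φ xz).val.1 τ = true) ∧
           (Φ xz).val.2 ⟨t.1 - a.1, Nat.lt_of_le_of_lt (Nat.sub_le _ _) t.isLt⟩ = true ∧
           (∀ τ : Fin T, t.1 - a.1 + 1 ≤ τ.1 → τ.1 ≤ t.1 → (Φ xz).val.2 τ = false))) := by
  classical
  refine ⟨fun xz => ⟨(xz.val.2, fun t : Fin T => xz.val.1 t ⟨0, Nat.succ_pos _⟩),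
      inD_of_feasible xz.prop⟩, fun _ => rfl, ⟨?_, ?_⟩, ?_⟩
  · -- injective
    intro xz xz' h
    have h1 : xz.val.2 = xz'.val.2 := congrArg (fun w => w.val.1) h
    have h2 : (fun t : Fin T => xz.val.1 t ⟨0, Nat.succ_pos _⟩)
        = fun t : Fin T => xz'.val.1 t ⟨0, Nat.succ_pos _⟩ := congrArg (fun w => w.val.2) h
    apply Subtype.ext
    refine Prod.ext ?_ h1
    funext t a
    have hc' := char_iff xz'.prop t a
    rw [← h1, ← h2] at hc'
    have hiff := (char_iff xz.prop t a).trans hc'.symm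
    cases hx : xz.val.1 t a <;> cases hx' : xz'.val.1 t a
    · rfl
    · rw [hx, hx'] at hiff; exact absurd (hiff.mpr rfl) (by simp)
    · rw [hx, hx'] at hiff; exact absurd (hiff.mp rfl) (by simp)
    · rfl
  · -- surjective
    rintro ⟨⟨q, p⟩, hD⟩
    refine ⟨⟨(xC q p, q), feasible_xC hD⟩, ?_⟩
    apply Subtype.ext
    show ((q : Fin T → Bool), fun t : Fin T => xC q p t ⟨0, Nat.succ_pos _⟩) = (q, p)
    refine Prod.ext rfl ?_
    funext t
    exact xC_zero hD t
  · intro xz t a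
    exact char_iff xz.prop t a
end
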